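/- Theorem 2 (linearization at full defection). The SR-EGN vector field F is differentiable at the all-zeros profile 0, its Fréchet derivative at 0 is the diagonal linear map whose v-th diagonal entry is μ_v = −σ_D·(k v − β v), and if there exists a player v with β v > k v then μ_v > 0 for that v (so the full-defection state is linearly unstable). -/

import Mathlib

/-- Theorem 2 (linearization at full defection). The SR-EGN vector field `F` is
differentiable at the all-zeros profile, its Fréchet derivative there is the diagonal
linear map with `v`-th diagonal entry `μ_v = -σD * (k v - β v)`, and if there exists a
player `v` with `β v > k v`, then `μ_v > 0` for that `v`. -/
theorem srEgn_linearization_allD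
    (N : ℕ) (hN : 1 ≤ N)
    (A : Fin N → Fin N → ℝ)
    (hA01 : ∀ v w, A v w = 0 ∨ A v w = 1)
    (hAdiag : ∀ v, A v v = 0)
    (σC σD : ℝ) (hσC : σC < 0) (hσD : 0 < σD)
    (β : Fin N → ℝ)
    (k : Fin N → ℝ) (hk : ∀ v, k v = ∑ w, A v w)
    (G : Fin N → (Fin N → ℝ) → ℝ)
    (hG : ∀ v x, G v x = ∑ w, A v w * ((σC + σD) * x w - σD))
    (f : ℝ → ℝ) (hf : ∀ y, f y = (σC + σD) * y - σD)
    (F : (Fin N → ℝ) → (Fin N → ℝ))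
    (hF : ∀ x v, F x v = x v * (1 - x v) * (G v x - β v * f (x v))) :
    HasFDerivAt F
      (ContinuousLinearMap.pi (fun v =>
        (-σD * (k v - β v)) • (ContinuousLinearMap.proj v : (Fin N → ℝ) →L[ℝ] ℝ)))
      (fun _ => 0)
    ∧ (∀ v, β v > k v → -σD * (k v - β v) > 0) := by
  constructor
  · have hFe : F = fun x v => x v * (1 - x v)
        * ((∑ w, A v w * ((σC + σD) * x w - σD)) - β v * ((σC + σD) * x v - σD)) := by
      funext x v
      rw [hF, hG, hf]
    rw [hFe]
    refine (hasFDerivAt_pi (𝕜 := ℝ) (E := Fin N → ℝ) (F' := fun _ : Fin N => ℝ)).mpr ?_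
    intro v
    have hp := hasFDerivAt_apply (𝕜 := ℝ) v (0 : Fin N → ℝ)
    have hq := (hasFDerivAt_const (1:ℝ) (0 : Fin N → ℝ)).fun_sub hp
    have hGd : HasFDerivAt
        (fun x : Fin N → ℝ => ∑ w, A v w * ((σC + σD) * x w - σD))
        (∑ w, A v w • ((σC + σD) • (ContinuousLinearMap.proj w : (Fin N → ℝ) →L[ℝ] ℝ)))
        0 := by
      refine HasFDerivAt.fun_sum fun w _ => ?_
      exact (((hasFDerivAt_apply (𝕜 := ℝ) w (0 : Fin N → ℝ)).const_mul
        (σC + σD)).sub_const σD).const_mul (A v w)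
    have hfv : HasFDerivAt (fun x : Fin N → ℝ => β v * ((σC + σD) * x v - σD))
        (β v • ((σC + σD) • (ContinuousLinearMap.proj v : (Fin N → ℝ) →L[ℝ] ℝ))) 0 :=
      ((hp.const_mul (σC + σD)).sub_const σD).const_mul (β v)
    have h := (hp.fun_mul hq).fun_mul (hGd.fun_sub hfv)
    convert h using 1
    case e'_8 => rfl
    case e'_13 => rfl
    ext x
    simp [Finset.mul_sum, ← Finset.sum_mul, ← hk v]
    ring
  · intro v hv
    have : k v - β v < 0 := by linarith
    nlinarith
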